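/- Let m ≥ 2 and let G be the disjoint union of two complete graphs, each on m vertices, with vertex weights equal to degrees (so w(u) = m−1 for every vertex u). Then for every partition of the vertex set of G into k ≥ 3 nonempty parts P_1, …, P_k, there exists a part P_i with φ_G(P_i) ≥ 1/3. -/

import Mathlib

open Finset

def twoCliques (m : ℕ) : SimpleGraph (Fin 2 × Fin m) where
  Adj p q := p ≠ q ∧ p.1 = q.1
  symm := by constructor; intro p q h; exact ⟨h.1.symm, h.2.symm⟩
  loopless := by constructor; intro p h; exact h.1 rfl

instance (m : ℕ) : DecidableRel (twoCliques m).Adj :=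
  fun p q => inferInstanceAs (Decidable (p ≠ q ∧ p.1 = q.1))

def cutEdges {V : Type*} [Fintype V] [DecidableEq V] (G : SimpleGraph V) [DecidableRel G.Adj]
    (S : Finset V) : Finset (Sym2 V) :=
  G.edgeFinset.filter (fun e => ∃ u ∈ S, ∃ v, v ∉ S ∧ e = s(u, v))

noncomputable def expansion {V : Type*} [Fintype V] [DecidableEq V] (G : SimpleGraph V)
    [DecidableRel G.Adj] (w : V → ℝ) (S : Finset V) : ℝ :=
  ((cutEdges G S).card : ℝ) / ∑ u ∈ S, w u

lemma clique_card (m : ℕ) (c : Fin 2) :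
    (univ.filter (fun p : Fin 2 × Fin m => p.1 = c)).card = m := by
  have : (univ.filter (fun p : Fin 2 × Fin m => p.1 = c)) = {c} ×ˢ univ := by
    ext p
    simp only [mem_filter, mem_univ, true_and, Finset.mem_product, Finset.mem_singleton]
    constructor
    · intro h; exact ⟨h, trivial⟩
    · intro h; exact h.1
  rw [this]
  simp

lemma keyA (m : ℕ) (hm : 2 ≤ m) (S : Finset (Fin 2 × Fin m)) (hS : S.Nonempty)
    (h : expansion (twoCliques m) (fun _ => (m : ℝ) - 1) S < 1/3) :
    ∃ c : Fin 2, m < 2 * (S.filter (fun p => p.1 = c)).card := by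
  set a : Fin 2 → ℕ := fun c => (S.filter (fun p => p.1 = c)).card with ha
  set b : Fin 2 → ℕ := fun c => (Sᶜ.filter (fun p => p.1 = c)).card with hb
  have hab : ∀ c, a c + b c = m := by
    intro c
    have h1 : (S.filter (fun p => p.1 = c)) ∪ (Sᶜ.filter (fun p => p.1 = c))
        = univ.filter (fun p : Fin 2 × Fin m => p.1 = c) := by
      rw [← Finset.filter_union, Finset.union_compl]
    have h2 : Disjoint (S.filter (fun p => p.1 = c)) (Sᶜ.filter (fun p => p.1 = c)) :=
      (disjoint_compl_right).mono (filter_subset _ _) (filter_subset _ _)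
    have := Finset.card_union_of_disjoint h2
    rw [h1, clique_card] at this
    exact this.symm
  -- card of S
  have hScard : S.card = a 0 + a 1 := by
    have := Finset.card_filter_add_card_filter_not (s := S)
      (p := fun p : Fin 2 × Fin m => p.1 = 0)
    have hneg : S.filter (fun p => ¬ p.1 = 0) = S.filter (fun p => p.1 = 1) := by
      apply Finset.filter_congr
      intro p _
      constructor
      · intro hp; exact Fin.eq_one_of_ne_zero p.1 hp
      · intro hp h0; rw [hp] at h0; exact absurd h0 (by decide)
    rw [hneg] at this
    have e0 : a 0 = (S.filter (fun p => p.1 = 0)).card := rfl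
    have e1 : a 1 = (S.filter (fun p => p.1 = 1)).card := rfl
    omega
  -- cut edges lower bound
  set E : Fin 2 → Finset (Sym2 (Fin 2 × Fin m)) := fun c =>
    ((S.filter (fun p => p.1 = c)) ×ˢ (Sᶜ.filter (fun p => p.1 = c))).image
      (fun q => s(q.1, q.2)) with hE
  have hEcard : ∀ c, (E c).card = a c * b c := by
    intro c
    rw [hE]
    rw [Finset.card_image_of_injOn, Finset.card_product]
    intro q hq q' hq' heq
    rw [Finset.mem_coe, Finset.mem_product] at hq hq'
    simp only [mem_filter, Finset.mem_compl] at hq hq'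
    rw [Sym2.eq_iff] at heq
    rcases heq with ⟨h1, h2⟩ | ⟨h1, h2⟩
    · exact Prod.ext h1 h2
    · exact absurd (h1 ▸ hq.1.1) hq'.2.1
  have hEsub : ∀ c, E c ⊆ cutEdges (twoCliques m) S := by
    intro c e he
    rw [hE] at he
    simp only [Finset.mem_image, Finset.mem_product, mem_filter, Finset.mem_compl] at he
    obtain ⟨⟨u, v⟩, ⟨⟨huS, huc⟩, hvS, hvc⟩, rfl⟩ := he
    rw [cutEdges, mem_filter]
    constructor
    · rw [SimpleGraph.mem_edgeFinset, SimpleGraph.mem_edgeSet]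
      exact ⟨fun hc => hvS (hc ▸ huS), by rw [huc, hvc]⟩
    · exact ⟨u, huS, v, hvS, rfl⟩
  have hEdisj : Disjoint (E 0) (E 1) := by
    rw [Finset.disjoint_left]
    intro e h0 h1
    rw [hE] at h0 h1
    simp only [Finset.mem_image, Finset.mem_product, mem_filter, Finset.mem_compl] at h0 h1
    obtain ⟨⟨u, v⟩, ⟨⟨_, huc⟩, _, hvc⟩, rfl⟩ := h0
    obtain ⟨⟨u', v'⟩, ⟨⟨_, huc'⟩, _, hvc'⟩, heq⟩ := h1
    rw [Sym2.eq_iff] at heq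
    rcases heq with ⟨h1, h2⟩ | ⟨h1, h2⟩
    · rw [h1, huc] at huc'; exact absurd huc' (by decide)
    · rw [h1, hvc] at huc'; exact absurd huc' (by decide)
  have hcut : a 0 * b 0 + a 1 * b 1 ≤ (cutEdges (twoCliques m) S).card := by
    calc a 0 * b 0 + a 1 * b 1 = (E 0).card + (E 1).card := by rw [hEcard, hEcard]
    _ = (E 0 ∪ E 1).card := (Finset.card_union_of_disjoint hEdisj).symm
    _ ≤ (cutEdges (twoCliques m) S).card :=
        Finset.card_le_card (Finset.union_subset (hEsub 0) (hEsub 1))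
  -- convert expansion
  have hw : ∑ u ∈ S, ((m : ℝ) - 1) = (S.card : ℝ) * ((m : ℝ) - 1) := by
    rw [Finset.sum_const, nsmul_eq_mul]
  have hwpos : (0 : ℝ) < (S.card : ℝ) * ((m : ℝ) - 1) := by
    apply mul_pos
    · exact_mod_cast Finset.card_pos.mpr hS
    · have : (2 : ℝ) ≤ (m : ℝ) := by exact_mod_cast hm
      linarith
  rw [expansion, hw, div_lt_div_iff₀ hwpos (by norm_num)] at h
  have hnat : 3 * (cutEdges (twoCliques m) S).card < S.card * (m - 1) := by
    have hm1 : ((m : ℝ) - 1) = ((m - 1 : ℕ) : ℝ) := by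
      have : (1 : ℕ) ≤ m := by omega
      push_cast [this]
      ring
    rw [hm1] at h
    exact_mod_cast (by linarith : (3 * (cutEdges (twoCliques m) S).card : ℝ)
      < (S.card : ℝ) * ((m - 1 : ℕ) : ℝ))
  have hkey : 3 * (a 0 * b 0 + a 1 * b 1) < (a 0 + a 1) * (m - 1) := by
    calc 3 * (a 0 * b 0 + a 1 * b 1) ≤ 3 * (cutEdges (twoCliques m) S).card := by omega
      _ < S.card * (m - 1) := hnat
      _ = (a 0 + a 1) * (m - 1) := by rw [hScard]
  -- find the clique
  by_contra hcon
  push_neg at hcon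
  have h0 := hcon 0
  have h1 := hcon 1
  have hab0 := hab 0
  have hab1 := hab 1
  -- need: for each c, a c * (m-1) ≤ 3 * (a c * b c)
  have hbound : ∀ c : Fin 2, 2 * a c ≤ m → a c * (m - 1) ≤ 3 * (a c * b c) := by
    intro c hc
    have habc := hab c
    have h3b : m - 1 ≤ 3 * b c := by omega
    calc a c * (m - 1) ≤ a c * (3 * b c) := Nat.mul_le_mul_left _ h3b
      _ = 3 * (a c * b c) := by ring
  have hb0 := hbound 0 h0
  have hb1 := hbound 1 h1
  rw [add_mul] at hkey
  linarith

theorem stmt16 (m : ℕ) (hm : 2 ≤ m) (k : ℕ) (hk : 3 ≤ k)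
    (P : Fin k → Finset (Fin 2 × Fin m))
    (hne : ∀ i, (P i).Nonempty)
    (hdisj : ∀ i j, i ≠ j → Disjoint (P i) (P j))
    (hcover : Finset.univ.biUnion P = Finset.univ) :
    ∃ i, (1 : ℝ) / 3 ≤ expansion (twoCliques m) (fun _ => (m : ℝ) - 1) (P i) := by
  by_contra hcon
  push_neg at hcon
  have key : ∀ i, ∃ c : Fin 2, m < 2 * ((P i).filter (fun p => p.1 = c)).card :=
    fun i => keyA m hm (P i) (hne i) (hcon i)
  choose c hc using key
  -- pigeonhole among three indices
  have hbig : ∀ i j : Fin k, i ≠ j → c i = c j → False := by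
    intro i j hij hcij
    have hA := hc i
    have hB := hc j
    rw [hcij] at hA
    set cl := c j
    have hdAB : Disjoint ((P i).filter (fun p => p.1 = cl)) ((P j).filter (fun p => p.1 = cl)) :=
      (hdisj i j hij).mono (filter_subset _ _) (filter_subset _ _)
    have hsub : ((P i).filter (fun p => p.1 = cl)) ∪ ((P j).filter (fun p => p.1 = cl))
        ⊆ univ.filter (fun p : Fin 2 × Fin m => p.1 = cl) := by
      intro p hp
      simp only [Finset.mem_union, mem_filter] at hp ⊢
      rcases hp with hp | hp <;> exact ⟨mem_univ _, hp.2⟩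
    have hle := Finset.card_le_card hsub
    rw [Finset.card_union_of_disjoint hdAB, clique_card] at hle
    omega
  have two : ∀ x y z : Fin 2, x ≠ y → x ≠ z → y = z := by decide
  set i0 : Fin k := ⟨0, by omega⟩ with hi0
  set i1 : Fin k := ⟨1, by omega⟩ with hi1
  set i2 : Fin k := ⟨2, by omega⟩ with hi2
  have h01 : i0 ≠ i1 := by simp [hi0, hi1, Fin.ext_iff]
  have h02 : i0 ≠ i2 := by simp [hi0, hi2, Fin.ext_iff]
  have h12 : i1 ≠ i2 := by simp [hi1, hi2, Fin.ext_iff]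
  by_cases e01 : c i0 = c i1
  · exact hbig i0 i1 h01 e01
  by_cases e02 : c i0 = c i2
  · exact hbig i0 i2 h02 e02
  · exact hbig i1 i2 h12 (two (c i0) (c i1) (c i2) e01 e02)
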